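/- Every signed graph Ġ contains a balanced spanning subgraph Ḣ (on the same vertex set) satisfying λ₁(Ġ) ≤ λ₁(Ḣ). -/

import Mathlib

open Matrix

/-- The signed adjacency matrix of a signed graph `(G, σ)`. -/
def signedAdj {V : Type*} (G : SimpleGraph V) [DecidableRel G.Adj]
    (σ : V → V → ℝ) : Matrix V V ℝ :=
  fun u v => if G.Adj u v then σ u v else 0

/-- The product of the edge signs along a walk in a signed graph. -/
def walkSign {V : Type*} {G : SimpleGraph V} (σ : V → V → ℝ) {u v : V} (w : G.Walk u v) : ℝ :=
  (w.darts.map fun d => σ d.toProd.1 d.toProd.2).prod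

/-- A signed graph is balanced if every cycle has edge-sign product `1`. -/
def IsBalanced {V : Type*} (G : SimpleGraph V) (σ : V → V → ℝ) : Prop :=
  ∀ (v : V) (w : G.Walk v v), w.IsCycle → walkSign σ w = 1

/-- Every signed graph `(G, σ)` contains a balanced spanning subgraph `(H, σ)` with
`λ₁(Ġ) ≤ λ₁(Ḣ)`. -/
lemma spectrum_real_eq_range {n : Type*} [Fintype n] [DecidableEq n] {A : Matrix n n ℝ}
    (hA : A.IsHermitian) : spectrum ℝ A = Set.range hA.eigenvalues := by
  conv_lhs => rw [hA.spectral_theorem]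
  have h1 : (RCLike.ofReal ∘ hA.eigenvalues : n → ℝ) = hA.eigenvalues := rfl
  rw [h1, Unitary.conjStarAlgAut_apply, Unitary.spectrum_star_right_conjugate, spectrum_diagonal]

lemma dot_mulVec_le {n : Type*} [Fintype n] [DecidableEq n] {A : Matrix n n ℝ}
    (hA : A.IsHermitian) {t : ℝ} (ht : ∀ i, hA.eigenvalues i ≤ t) (x : n → ℝ) :
    x ⬝ᵥ (A *ᵥ x) ≤ t * (x ⬝ᵥ x) := by
  set U : Matrix n n ℝ := (hA.eigenvectorUnitary : Matrix n n ℝ) with hUdef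
  have hstar : star U = Uᵀ := by
    ext i j; simp [Matrix.star_eq_conjTranspose, Matrix.conjTranspose_apply]
  set c : n → ℝ := Uᵀ *ᵥ x with hc
  have hdot : ∀ w : n → ℝ, x ⬝ᵥ (U *ᵥ w) = c ⬝ᵥ w := by
    intro w
    rw [Matrix.dotProduct_mulVec, hc, Matrix.mulVec_transpose]
  have key : x ⬝ᵥ (A *ᵥ x) = c ⬝ᵥ (diagonal hA.eigenvalues *ᵥ c) := by
    conv_lhs => rw [hA.spectral_theorem]
    have h1 : (RCLike.ofReal ∘ hA.eigenvalues : n → ℝ) = hA.eigenvalues := rfl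
    rw [h1, Unitary.conjStarAlgAut_apply, hstar, ← hUdef, Matrix.mul_assoc, ← Matrix.mulVec_mulVec, hdot,
      ← Matrix.mulVec_mulVec]
  have hcc : c ⬝ᵥ c = x ⬝ᵥ x := by
    have h2 : c ⬝ᵥ c = x ⬝ᵥ (U *ᵥ c) := (hdot c).symm
    rw [h2, hc, Matrix.mulVec_mulVec, ← hstar,
      (Matrix.mem_unitaryGroup_iff).mp hA.eigenvectorUnitary.2, Matrix.one_mulVec]
  rw [key, ← hcc]
  simp only [dotProduct, Matrix.mulVec_diagonal, Finset.mul_sum]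
  apply Finset.sum_le_sum
  intro i _
  have h3 : c i * (hA.eigenvalues i * c i) = hA.eigenvalues i * (c i * c i) := by ring
  rw [h3]
  exact mul_le_mul_of_nonneg_right (ht i) (mul_self_nonneg _)

lemma walkSign_switch {V : Type*} {H : SimpleGraph V} (σ : V → V → ℝ) (ε : V → ℝ)
    (hε : ∀ v, ε v * ε v = 1) (hσ : ∀ u v, H.Adj u v → σ u v = ε u * ε v) :
    ∀ {u v : V} (w : H.Walk u v), walkSign σ w = ε u * ε v := by
  intro u v w
  induction w with
  | nil => simp [walkSign, hε]
  | @cons a b c hab p ih =>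
    have : walkSign σ (SimpleGraph.Walk.cons hab p) = σ a b * walkSign σ p := by
      simp [walkSign, SimpleGraph.Walk.darts_cons]
    rw [this, ih, hσ a b hab]
    linear_combination ε a * ε c * hε b

theorem exists_balanced_spanning_subgraph_index_ge {V : Type*} [Fintype V] [DecidableEq V]
    (G : SimpleGraph V) [DecidableRel G.Adj] (σ : V → V → ℝ)
    (hσsymm : ∀ u v, σ u v = σ v u)
    (hσsign : ∀ u v, G.Adj u v → σ u v = 1 ∨ σ u v = -1) :
    ∃ (H : SimpleGraph V) (_ : DecidableRel H.Adj), H ≤ G ∧ IsBalanced H σ ∧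
      sSup (spectrum ℝ (signedAdj G σ)) ≤ sSup (spectrum ℝ (signedAdj H σ)) := by
  cases isEmpty_or_nonempty V with
  | inl hemp =>
    refine ⟨⊥, inferInstance, bot_le, fun v => isEmptyElim v, ?_⟩
    have h : signedAdj G σ = signedAdj ⊥ σ := by ext u v; exact isEmptyElim u
    rw [h]
  | inr hne =>
    set A := signedAdj G σ with hAdef
    have hA : A.IsHermitian := by
      rw [Matrix.IsHermitian]
      ext u v
      simp only [Matrix.conjTranspose_apply, hAdef, signedAdj, star_trivial]
      by_cases h : G.Adj u v
      · rw [if_pos h, if_pos h.symm, hσsymm]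
      · rw [if_neg h, if_neg (fun h' => h h'.symm)]
    obtain ⟨i₀, hi₀⟩ := Finite.exists_max hA.eigenvalues
    set x : V → ℝ := ⇑(hA.eigenvectorBasis i₀) with hx
    have hAx : A *ᵥ x = hA.eigenvalues i₀ • x := hA.mulVec_eigenvectorBasis i₀
    have hxx : x ⬝ᵥ x = 1 := by
      have hn := hA.eigenvectorBasis.orthonormal.1 i₀
      have h1 : (x ⬝ᵥ x) = @inner ℝ _ _ (hA.eigenvectorBasis i₀) (hA.eigenvectorBasis i₀) := by
        simp only [dotProduct, PiLp.inner_apply, RCLike.inner_apply, starRingEnd_apply,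
          star_trivial]
        rfl
      rw [h1, real_inner_self_eq_norm_sq, hn]
      norm_num
    set ε : V → ℝ := fun v => if x v < 0 then -1 else 1 with hεdef
    have hεcase : ∀ w, ε w = 1 ∨ ε w = -1 := by
      intro w; rw [hεdef]; dsimp only; split <;> simp
    have hεsq : ∀ w, ε w * ε w = 1 := by
      intro w; rcases hεcase w with h | h <;> rw [h] <;> norm_num
    have hεnn : ∀ w, 0 ≤ ε w * x w := by
      intro w; rw [hεdef]; dsimp only; split
      · next h => nlinarith
      · next h => push_neg at h; nlinarith
    refine ⟨⟨fun u v => G.Adj u v ∧ σ u v * (ε u * ε v) = 1, ?_, ?_⟩,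
      fun u v => instDecidableAnd, by intro u v h; exact h.1, ?_, ?_⟩
    · constructor; intro u v ⟨h1, h2⟩
      exact ⟨h1.symm, by rw [← hσsymm, mul_comm (ε v)]; exact h2⟩
    · constructor; intro v h
      exact G.loopless.irrefl v h.1
    · -- balanced
      intro v w _
      have hσε : ∀ u v, (G.Adj u v ∧ σ u v * (ε u * ε v) = 1) → σ u v = ε u * ε v := by
        intro u v ⟨h1, h2⟩
        linear_combination ε u * ε v * h2 - σ u v * (ε v * ε v) * hεsq u - σ u v * hεsq v
      rw [walkSign_switch σ ε hεsq hσε w, hεsq]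
    · -- spectral inequality
      set H : SimpleGraph V := ⟨fun u v => G.Adj u v ∧ σ u v * (ε u * ε v) = 1, _, _⟩
      set B := signedAdj H σ with hBdef
      have hB : B.IsHermitian := by
        rw [Matrix.IsHermitian]
        ext u v
        simp only [Matrix.conjTranspose_apply, hBdef, signedAdj, star_trivial]
        by_cases h : H.Adj u v
        · rw [if_pos h, if_pos (H.adj_symm h), hσsymm]
        · rw [if_neg h, if_neg (fun h' => h (H.adj_symm h'))]
      obtain ⟨j₀, hj₀⟩ := Finite.exists_max hB.eigenvalues
      have step1 : sSup (spectrum ℝ A) ≤ hA.eigenvalues i₀ := by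
        rw [spectrum_real_eq_range hA]
        exact csSup_le (Set.range_nonempty _) (by rintro _ ⟨i, rfl⟩; exact hi₀ i)
      have step2 : hA.eigenvalues i₀ = x ⬝ᵥ (A *ᵥ x) := by
        rw [hAx, dotProduct_smul, smul_eq_mul, hxx, mul_one]
      have step3 : x ⬝ᵥ (A *ᵥ x) ≤ x ⬝ᵥ (B *ᵥ x) := by
        simp only [dotProduct, Matrix.mulVec, Finset.mul_sum]
        apply Finset.sum_le_sum
        intro u _
        apply Finset.sum_le_sum
        intro v _
        show x u * (A u v * x v) ≤ x u * (B u v * x v)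
        by_cases hH : H.Adj u v
        · have h1 : A u v = σ u v := if_pos hH.1
          have h2 : B u v = σ u v := if_pos hH
          rw [h1, h2]
        · have h2 : B u v = 0 := if_neg hH
          rw [h2]
          by_cases hG : G.Adj u v
          · have h1 : A u v = σ u v := if_pos hG
            have hH2 : ¬(σ u v * (ε u * ε v) = 1) := fun h => hH ⟨hG, h⟩
            have h3 : σ u v = -(ε u * ε v) := by
              rcases hσsign u v hG with h | h <;> rcases hεcase u with h4 | h4 <;>
                rcases hεcase v with h5 | h5 <;> rw [h, h4, h5] at hH2 ⊢ <;> norm_num at hH2 <;> norm_num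
            have h6 : x u * (A u v * x v) = -((ε u * x u) * (ε v * x v)) := by
              rw [h1, h3]; ring
            rw [h6]
            simpa using mul_nonneg (hεnn u) (hεnn v)
          · have h1 : A u v = 0 := if_neg hG
            rw [h1]
      have step4 : x ⬝ᵥ (B *ᵥ x) ≤ hB.eigenvalues j₀ := by
        have := dot_mulVec_le hB hj₀ x
        rwa [hxx, mul_one] at this
      have step5 : hB.eigenvalues j₀ ≤ sSup (spectrum ℝ B) := by
        rw [spectrum_real_eq_range hB]
        exact le_csSup (Set.finite_range _).bddAbove ⟨j₀, rfl⟩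
      calc sSup (spectrum ℝ A) ≤ hA.eigenvalues i₀ := step1
        _ = x ⬝ᵥ (A *ᵥ x) := step2
        _ ≤ x ⬝ᵥ (B *ᵥ x) := step3
        _ ≤ hB.eigenvalues j₀ := step4
        _ ≤ sSup (spectrum ℝ B) := step5
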